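/- Let X = (ℝ×{0}) ∪ ({0}×(−∞,1]) ⊂ ℝ² with the sup-metric and 1-dimensional Hausdorff measure μ, and u(x) = x₂ for 0 < x₂ ≤ 1, u = 0 otherwise. Then for 0 ≤ α ≤ 1 and any ball B(z,r) containing the origin: if r ≤ 1/2 then r^α ⨍_{B(z,r)} u dμ ≤ 1/4, and if r > 1/2 then r^α ⨍_{B(z,r)} u dμ ≤ 1/3. -/

import Mathlib

open MeasureTheory Metric Set
open scoped ENNReal

/-- The cross-shaped set `X = (ℝ×{0}) ∪ ({0}×(−∞,1]) ⊂ ℝ²`, where `ℝ²` carries the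
sup-metric (the product metric on `ℝ × ℝ`). -/
def Cross : Set (ℝ × ℝ) := {p | p.2 = 0 ∨ (p.1 = 0 ∧ p.2 ≤ 1)}

/-- The function `u(x) = x₂` if `0 < x₂ ≤ 1`, `u(x) = 0` otherwise. -/
noncomputable def uCross (p : Cross) : ℝ :=
  if 0 < (p : ℝ × ℝ).2 ∧ (p : ℝ × ℝ).2 ≤ 1 then (p : ℝ × ℝ).2 else 0



lemma cross_meas : MeasurableSet Cross := by
  have : Cross = (Prod.snd ⁻¹' {(0:ℝ)}) ∪ ((Prod.fst ⁻¹' {(0:ℝ)}) ∩ (Prod.snd ⁻¹' Iic (1:ℝ))) := by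
    ext p; simp [Cross, Set.mem_union, Set.mem_inter_iff, Set.mem_preimage]
  rw [this]
  exact ((measurable_snd (measurableSet_singleton 0))).union
    ((measurable_fst (measurableSet_singleton 0)).inter (measurable_snd measurableSet_Iic))

noncomputable def eV : ℝ → ℝ × ℝ := fun t => (0, t)
noncomputable def eH : ℝ → ℝ × ℝ := fun s => (s, 0)

lemma isometry_eV : Isometry eV := by
  apply Isometry.of_dist_eq; intro a b
  simp [eV, Prod.dist_eq, dist_self, dist_nonneg]

lemma isometry_eH : Isometry eH := by
  apply Isometry.of_dist_eq; intro a b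
  simp [eH, Prod.dist_eq, dist_self, dist_nonneg]

lemma muH_image_eV (S : Set ℝ) : μH[1] (eV '' S) = volume S := by
  rw [isometry_eV.hausdorffMeasure_image (Or.inl zero_le_one), MeasureTheory.hausdorffMeasure_real]

lemma muH_image_eH (S : Set ℝ) : μH[1] (eH '' S) = volume S := by
  rw [isometry_eH.hausdorffMeasure_image (Or.inl zero_le_one), MeasureTheory.hausdorffMeasure_real]

lemma map_eV : Measure.map eV volume = (μH[1] : Measure (ℝ×ℝ)).restrict (range eV) := by
  rw [← MeasureTheory.hausdorffMeasure_real]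
  exact isometry_eV.map_hausdorffMeasure (Or.inl zero_le_one)

lemma map_val : Measure.map (Subtype.val : Cross → ℝ×ℝ) (μH[1] : Measure Cross)
    = (μH[1] : Measure (ℝ×ℝ)).restrict Cross := by
  rw [isometry_subtype_coe.map_hausdorffMeasure (Or.inl zero_le_one), Subtype.range_coe]

lemma emb_eV : MeasurableEmbedding eV :=
  (isometry_eV.isClosedEmbedding).measurableEmbedding

lemma emb_val : MeasurableEmbedding (Subtype.val : Cross → ℝ×ℝ) :=
  MeasurableEmbedding.subtype_coe cross_meas

lemma core (z : Cross) (r : ℝ) (hr : 0 < r)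
    (h0 : (⟨(0, 0), Or.inl rfl⟩ : Cross) ∈ ball z r) :
    ENNReal.ofReal (2*r + (min ((z:ℝ×ℝ).2 + r) 1 - ((z:ℝ×ℝ).2 - r)))
        ≤ (μH[1] : Measure Cross) (ball z r) ∧
    (μH[1] : Measure Cross) (ball z r) ≠ ⊤ ∧
    0 ≤ (∫ y in ball z r, uCross y ∂(μH[1] : Measure Cross)) ∧
    (∫ y in ball z r, uCross y ∂(μH[1] : Measure Cross)) ≤ (min ((z:ℝ×ℝ).2 + r) 1)^2 / 2 := by
  set h := (z:ℝ×ℝ).1 with hh_def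
  set c := (z:ℝ×ℝ).2 with hc_def
  set b := min (c + r) 1 with hb_def
  -- origin in ball
  have hdist : max |h| |c| < r := by
    have := mem_ball.1 h0
    rw [Subtype.dist_eq, Prod.dist_eq] at this
    simpa [Real.dist_eq, abs_sub_comm] using this
  have hh : |h| < r := (max_lt_iff.1 hdist).1
  have hc : |c| < r := (max_lt_iff.1 hdist).2
  have hc1 : c ≤ 1 := by
    rcases z.2 with h1 | h1
    · rw [← hc_def] at *; rw [h1]; norm_num
    · exact h1.2
  have hcr : -r < c := (abs_lt.1 hc).1
  have hcr' : c < r := (abs_lt.1 hc).2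
  have hb0 : 0 < b := lt_min (by linarith) one_pos
  have hcb : c ≤ b := le_min (by linarith) hc1
  have hb1 : b ≤ 1 := min_le_right _ _
  -- ball membership in ℝ×ℝ
  have hball : ∀ p : ℝ×ℝ, p ∈ ball (z:ℝ×ℝ) r ↔ |p.1 - h| < r ∧ |p.2 - c| < r := by
    intro p
    rw [mem_ball, Prod.dist_eq, max_lt_iff]
    simp [Real.dist_eq]; exact Iff.rfl
  have hA : ball z r = Subtype.val ⁻¹' ball (z:ℝ×ℝ) r := by
    ext y; simp [mem_ball, Subtype.dist_eq]
  have hB : (μH[1] : Measure Cross) (ball z r) = μH[1] (ball (z:ℝ×ℝ) r ∩ Cross) := by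
    rw [hA, isometry_subtype_coe.hausdorffMeasure_preimage (Or.inl zero_le_one),
      Subtype.range_coe]
  -- lower bound
  have HS : eH '' Ioo (h - r) (h + r) ⊆ ball (z:ℝ×ℝ) r ∩ Cross := by
    rintro _ ⟨s, hs, rfl⟩
    refine ⟨(hball _).2 ⟨?_, ?_⟩, Or.inl rfl⟩
    · simp only [eH, abs_lt]; exact ⟨by linarith [hs.1], by linarith [hs.2]⟩
    · simpa [eH, abs_sub_comm] using hc
  have VS : eV '' (Ioo (c - r) b \ {0}) ⊆ ball (z:ℝ×ℝ) r ∩ Cross := by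
    rintro _ ⟨t, ⟨ht, _⟩, rfl⟩
    refine ⟨(hball _).2 ⟨?_, ?_⟩, Or.inr ⟨rfl, ?_⟩⟩
    · simpa [eV, abs_sub_comm] using hh
    · simp only [eV, abs_lt]
      have := lt_of_lt_of_le ht.2 (min_le_left (c+r) 1)
      exact ⟨by linarith [ht.1], by linarith⟩
    · exact le_trans ht.2.le hb1
  have hdisj : Disjoint (eH '' Ioo (h - r) (h + r)) (eV '' (Ioo (c - r) b \ {0})) := by
    rw [Set.disjoint_left]
    rintro _ ⟨s, _, rfl⟩ ⟨t, ⟨_, ht0⟩, hEq⟩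
    apply ht0
    have : t = (0:ℝ) := by
      have h2 := congrArg Prod.snd hEq
      simpa [eV, eH] using h2
    simp [this]
  have hmeasV : MeasurableSet (eV '' (Ioo (c - r) b \ {0})) :=
    emb_eV.measurableSet_image' (measurableSet_Ioo.diff (measurableSet_singleton 0))
  have hlow : ENNReal.ofReal (2*r + (b - (c - r))) ≤ (μH[1] : Measure Cross) (ball z r) := by
    rw [hB, ENNReal.ofReal_add (by linarith) (by linarith)]
    calc ENNReal.ofReal (2*r) + ENNReal.ofReal (b - (c - r))
        = μH[1] (eH '' Ioo (h - r) (h + r)) + μH[1] (eV '' (Ioo (c - r) b \ {0})) := by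
          rw [muH_image_eH, muH_image_eV, measure_diff_null (measure_singleton 0),
            Real.volume_Ioo, Real.volume_Ioo]
          congr 2
          ring
      _ = μH[1] (eH '' Ioo (h - r) (h + r) ∪ eV '' (Ioo (c - r) b \ {0})) :=
          (measure_union hdisj hmeasV).symm
      _ ≤ μH[1] (ball (z:ℝ×ℝ) r ∩ Cross) := measure_mono (union_subset HS VS)
  -- upper bound (finiteness)
  have hup : (μH[1] : Measure Cross) (ball z r) ≠ ⊤ := by
    rw [hB]
    have hsub : ball (z:ℝ×ℝ) r ∩ Cross ⊆
        eH '' Ioo (h - r) (h + r) ∪ eV '' Ioo (c - r) (c + r) := by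
      rintro p ⟨hpB, hpC⟩
      rw [hball] at hpB
      rcases hpC with h1 | h1
      · left
        refine ⟨p.1, abs_lt.1 hpB.1 |>.imp (fun h => by linarith) (fun h => by linarith), ?_⟩
        rw [eH]; exact Prod.ext rfl h1.symm
      · right
        refine ⟨p.2, abs_lt.1 hpB.2 |>.imp (fun h => by linarith) (fun h => by linarith), ?_⟩
        rw [eV]; exact Prod.ext h1.1.symm rfl
    refine ne_of_lt (lt_of_le_of_lt (measure_mono hsub)
      (lt_of_le_of_lt (measure_union_le _ _) ?_))
    rw [muH_image_eH, muH_image_eV, Real.volume_Ioo, Real.volume_Ioo]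
    exact ENNReal.add_lt_top.2 ⟨ENNReal.ofReal_lt_top, ENNReal.ofReal_lt_top⟩
  -- integral
  set v : ℝ × ℝ → ℝ := fun p => if 0 < p.2 ∧ p.2 ≤ 1 ∧ p.1 = 0 then p.2 else 0 with hv_def
  have huv : ∀ y : Cross, uCross y = v (y : ℝ × ℝ) := by
    intro y
    rw [uCross, hv_def]
    dsimp only
    by_cases hy : 0 < (y : ℝ × ℝ).2 ∧ (y : ℝ × ℝ).2 ≤ 1
    · have h1 : (y : ℝ × ℝ).1 = 0 := by
        rcases y.2 with h1 | h1
        · exact absurd h1 (ne_of_gt hy.1)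
        · exact h1.1
      rw [if_pos hy, if_pos ⟨hy.1, hy.2, h1⟩]
    · rw [if_neg hy, if_neg (fun hcon => hy ⟨hcon.1, hcon.2.1⟩)]
  set L : Set (ℝ × ℝ) := ({0} : Set ℝ) ×ˢ Ioc (0:ℝ) 1 with hL_def
  have hLmeas : MeasurableSet L := (measurableSet_singleton 0).prod measurableSet_Ioc
  have hL_sub : L ⊆ Cross := by
    rintro p ⟨hp1, hp2⟩
    exact Or.inr ⟨hp1, hp2.2⟩
  have hv_ind : v = L.indicator v := by
    funext p
    by_cases hp : p ∈ L
    · rw [Set.indicator_of_mem hp]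
    · rw [Set.indicator_of_notMem hp, hv_def]
      dsimp only
      rw [if_neg]
      intro hcon
      exact hp ⟨hcon.2.2, hcon.1, hcon.2.1⟩
  set S : Set ℝ := Ioo (c - r) (c + r) ∩ Ioc 0 1 with hS_def
  have hSmeas : MeasurableSet S := measurableSet_Ioo.inter measurableSet_Ioc
  have hBLmeas : MeasurableSet (ball (z:ℝ×ℝ) r ∩ L) := measurableSet_ball.inter hLmeas
  have hBL_range : ball (z:ℝ×ℝ) r ∩ L ⊆ range eV := by
    rintro p ⟨_, hp1, _⟩
    exact ⟨p.2, Prod.ext hp1.symm rfl⟩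
  have hpre : eV ⁻¹' (ball (z:ℝ×ℝ) r ∩ L) = S := by
    ext t
    constructor
    · rintro ⟨hb', h0t⟩
      have h2 := ((hball _).1 hb').2
      simp only [eV] at h2
      rw [abs_lt] at h2
      have h3 : t ∈ Ioc (0:ℝ) 1 := (Set.mem_prod.1 h0t).2
      exact ⟨⟨by linarith [h2.1], by linarith [h2.2]⟩, h3⟩
    · rintro ⟨h1, h2⟩
      refine ⟨(hball _).2 ⟨?_, ?_⟩, Set.mem_prod.2 ⟨rfl, h2⟩⟩
      · simpa [eV, abs_sub_comm] using hh
      · simp only [eV]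
        rw [abs_lt]
        exact ⟨by linarith [h1.1], by linarith [h1.2]⟩
  have hI1 : (∫ y in ball z r, uCross y ∂(μH[1] : Measure Cross)) = ∫ t in S, t ∂volume := by
    calc (∫ y in ball z r, uCross y ∂(μH[1] : Measure Cross))
        = ∫ y in Subtype.val ⁻¹' ball (z:ℝ×ℝ) r, v (y : ℝ × ℝ) ∂(μH[1] : Measure Cross) := by
          rw [← hA]
          exact integral_congr_ae (Filter.Eventually.of_forall fun y => huv y)
      _ = ∫ p in ball (z:ℝ×ℝ) r, v p ∂(Measure.map Subtype.val (μH[1] : Measure Cross)) :=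
          (emb_val.setIntegral_map v _).symm
      _ = ∫ p in ball (z:ℝ×ℝ) r, v p ∂((μH[1] : Measure (ℝ×ℝ)).restrict Cross) := by
          rw [map_val]
      _ = ∫ p in ball (z:ℝ×ℝ) r ∩ Cross, v p ∂(μH[1] : Measure (ℝ×ℝ)) := by
          rw [Measure.restrict_restrict measurableSet_ball]
      _ = ∫ p in (ball (z:ℝ×ℝ) r ∩ Cross) ∩ L, v p ∂(μH[1] : Measure (ℝ×ℝ)) := by
          conv_lhs => rw [hv_ind]
          rw [setIntegral_indicator hLmeas]
      _ = ∫ p in ball (z:ℝ×ℝ) r ∩ L, v p ∂(μH[1] : Measure (ℝ×ℝ)) := by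
          rw [inter_assoc, Set.inter_eq_right.2 hL_sub]
      _ = ∫ p in ball (z:ℝ×ℝ) r ∩ L, v p ∂((μH[1] : Measure (ℝ×ℝ)).restrict (range eV)) := by
          rw [Measure.restrict_restrict hBLmeas, Set.inter_eq_left.2 hBL_range]
      _ = ∫ p in ball (z:ℝ×ℝ) r ∩ L, v p ∂(Measure.map eV volume) := by rw [map_eV]
      _ = ∫ t in eV ⁻¹' (ball (z:ℝ×ℝ) r ∩ L), v (eV t) ∂volume := emb_eV.setIntegral_map v _
      _ = ∫ t in S, t ∂volume := by
          rw [hpre]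
          refine setIntegral_congr_fun hSmeas fun t ht => ?_
          rw [hv_def]
          exact if_pos ⟨ht.2.1, ht.2.2, rfl⟩
  refine ⟨hlow, hup, ?_, ?_⟩
  · rw [hI1]
    exact setIntegral_nonneg hSmeas fun t ht => ht.2.1.le
  · rw [hI1]
    have hsub2 : S ⊆ Ioc 0 b := fun t ht => ⟨ht.2.1, le_min ht.1.2.le ht.2.2⟩
    have hInt : IntegrableOn (fun t : ℝ => t) (Ioc 0 b) volume :=
      continuous_id.integrableOn_Ioc
    calc (∫ t in S, t ∂volume) ≤ ∫ t in Ioc 0 b, t ∂volume := by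
          refine setIntegral_mono_set hInt ?_ (HasSubset.Subset.eventuallyLE hsub2)
          exact (ae_restrict_iff' measurableSet_Ioc).2 (Filter.Eventually.of_forall fun t ht => ht.1.le)
      _ = b ^ 2 / 2 := by
          rw [← intervalIntegral.integral_of_le hb0.le, integral_id]
          ring

/-- On the cross `X` with the 1-dimensional Hausdorff measure, for
`0 ≤ α ≤ 1` and any ball `B(z,r)` containing the origin: if `r ≤ 1/2` then
`r^α ⨍_{B(z,r)} u dμ ≤ 1/4`, and if `r > 1/2` then `r^α ⨍_{B(z,r)} u dμ ≤ 1/3`. -/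
theorem cross_ball_average_bounds
    (α : ℝ) (hα0 : 0 ≤ α) (hα1 : α ≤ 1) :
    ∀ (z : Cross) (r : ℝ), 0 < r →
      (⟨(0, 0), Or.inl rfl⟩ : Cross) ∈ ball z r →
      (r ≤ 1 / 2 →
        r ^ α * ⨍ y in ball z r, uCross y ∂(μH[1] : Measure Cross) ≤ 1 / 4) ∧
      (1 / 2 < r →
        r ^ α * ⨍ y in ball z r, uCross y ∂(μH[1] : Measure Cross) ≤ 1 / 3) := by
  intro z r hr h0
  obtain ⟨hlow, hfin, hI0, hIle⟩ := core z r hr h0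
  set c := (z : ℝ × ℝ).2 with hc_def
  set b := min (c + r) 1 with hb_def
  set I := ∫ y in ball z r, uCross y ∂(μH[1] : Measure Cross) with hI_def
  set M := ((μH[1] : Measure Cross) (ball z r)).toReal with hM_def
  have hc : |c| < r := by
    have := mem_ball.1 h0
    rw [Subtype.dist_eq, Prod.dist_eq] at this
    exact (max_lt_iff.1 (by simpa [Real.dist_eq, abs_sub_comm] using this)).2
  have hcr : -r < c := (abs_lt.1 hc).1
  have hcr' : c < r := (abs_lt.1 hc).2
  have hc1 : c ≤ 1 := by
    rcases z.2 with h1 | h1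
    · rw [hc_def, h1]; norm_num
    · exact h1.2
  have hb0 : 0 < b := lt_min (by linarith) one_pos
  have hcb : c ≤ b := le_min (by linarith) hc1
  have hb1 : b ≤ 1 := min_le_right _ _
  have havg : (⨍ y in ball z r, uCross y ∂(μH[1] : Measure Cross)) = M⁻¹ * I := by
    rw [setAverage_eq, smul_eq_mul]; rfl
  have hMge : 2 * r + (b - (c - r)) ≤ M := by
    have h1 := ENNReal.toReal_mono hfin hlow
    rwa [ENNReal.toReal_ofReal (by linarith)] at h1
  have hM0 : 0 < M := lt_of_lt_of_le (by linarith) hMge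
  have hMI0 : 0 ≤ M⁻¹ * I := mul_nonneg (inv_nonneg.2 hM0.le) hI0
  rw [havg]
  constructor
  · intro hr2
    have hb_eq : b = c + r := min_eq_left (by linarith)
    have hM4 : 4 * r ≤ M := by rw [hb_eq] at hMge; linarith
    have havg_le : M⁻¹ * I ≤ r / 2 := by
      have h1 : M⁻¹ ≤ (4 * r)⁻¹ := inv_anti₀ (by linarith) hM4
      calc M⁻¹ * I ≤ (4 * r)⁻¹ * I := mul_le_mul_of_nonneg_right h1 hI0
        _ ≤ (4 * r)⁻¹ * (b ^ 2 / 2) := mul_le_mul_of_nonneg_left hIle (by positivity)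
        _ ≤ (4 * r)⁻¹ * (2 * r ^ 2) := by
            refine mul_le_mul_of_nonneg_left ?_ (by positivity)
            nlinarith [hb0, hb_eq]
        _ = r / 2 := by field_simp; ring
    have hra : r ^ α ≤ 1 := Real.rpow_le_one hr.le (by linarith) hα0
    calc r ^ α * (M⁻¹ * I) ≤ 1 * (r / 2) := mul_le_mul hra havg_le hMI0 one_pos.le
      _ ≤ 1 / 4 := by linarith
  · intro hr2
    have hM3 : 3 * r ≤ M := by linarith
    have havg_le : M⁻¹ * I ≤ (3 * r)⁻¹ * (1 / 2) := by
      have h1 : M⁻¹ ≤ (3 * r)⁻¹ := inv_anti₀ (by linarith) hM3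
      calc M⁻¹ * I ≤ (3 * r)⁻¹ * I := mul_le_mul_of_nonneg_right h1 hI0
        _ ≤ (3 * r)⁻¹ * (b ^ 2 / 2) := mul_le_mul_of_nonneg_left hIle (by positivity)
        _ ≤ (3 * r)⁻¹ * (1 / 2) := by
            refine mul_le_mul_of_nonneg_left ?_ (by positivity)
            nlinarith [hb0, hb1]
    have hra : r ^ α ≤ 2 * r := by
      rcases le_or_gt r 1 with h1 | h1
      · have := Real.rpow_le_one hr.le h1 hα0
        linarith
      · have h2 := Real.rpow_le_rpow_of_exponent_le h1.le hα1
        rw [Real.rpow_one] at h2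
        linarith
    calc r ^ α * (M⁻¹ * I) ≤ (2 * r) * ((3 * r)⁻¹ * (1 / 2)) :=
          mul_le_mul hra havg_le hMI0 (by linarith)
      _ = 1 / 3 := by field_simp
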